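/- Let G be a Hausdorff topological group and n ≥ 1 a natural number. If the translation action map G × C G → C G, (g, [x,t]) ↦ [g·x, t], is not continuous (C G with the quotient topology), then the diagonal right action map E_n G × G → E_n G, ([g,t], h) ↦ [(i ↦ g i · h), t], is not continuous (E_n G with the quotient topology, the domains with the product topology). -/

import Mathlib

open Set

/-- The cone relation on `X × [0,1]`: identify `(x,0) ~ (x',0)`. -/
abbrev coneRel (X : Type*) : X × Icc (0 : ℝ) 1 → X × Icc (0 : ℝ) 1 → Prop :=
  fun p q => p = q ∨ ((p.2 : ℝ) = 0 ∧ (q.2 : ℝ) = 0)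

/-- The cone `C X` with the quotient topology. -/
abbrev Cone (X : Type*) := Quot (coneRel X)

/-- The Milnor relation on `(Fin (n+1) → G) × Δⁿ`:
`(g,t) ~ (g',t')` iff `t = t'` and `g i = g' i` whenever `t i ≠ 0`. -/
abbrev milnorRel (n : ℕ) (G : Type*) :
    (Fin (n + 1) → G) × stdSimplex ℝ (Fin (n + 1)) →
      (Fin (n + 1) → G) × stdSimplex ℝ (Fin (n + 1)) → Prop := fun p q =>
  p.2 = q.2 ∧ ∀ i, (p.2 : Fin (n + 1) → ℝ) i ≠ 0 → p.1 i = q.1 i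

/-- The truncated Milnor space `Eₙ G` with the quotient topology. -/
abbrev MilnorE (n : ℕ) (G : Type*) := Quot (milnorRel n G)

variable (G : Type*) [Group G] [TopologicalSpace G] [IsTopologicalGroup G] [T2Space G]

/-- The translation action `G × C G → C G`, `(g, [x,t]) ↦ [g·x, t]`. -/
def coneAct : G × Cone G → Cone G := fun p =>
  Quot.lift
    (fun x : G × Icc (0 : ℝ) 1 => Quot.mk (coneRel G) (p.1 * x.1, x.2))
    (by
      rintro a b (rfl | ⟨h0a, h0b⟩)
      · rfl
      · exact Quot.sound (Or.inr ⟨h0a, h0b⟩))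
    p.2

/-- The diagonal right action `Eₙ G × G → Eₙ G`,
`([g,t], h) ↦ [(i ↦ g i · h), t]`. -/
def milnorAct (n : ℕ) : MilnorE n G × G → MilnorE n G := fun p =>
  Quot.lift
    (fun x : (Fin (n + 1) → G) × stdSimplex ℝ (Fin (n + 1)) =>
      Quot.mk (milnorRel n G) (fun i => x.1 i * p.2, x.2))
    (fun a b h => Quot.sound ⟨h.1, fun i hi => by simp only at hi ⊢; rw [h.2 i hi]⟩)
    p.1

section Aux

variable (m : ℕ)

/-- The point `(t, 1-t, 0, …, 0)` of the standard simplex. -/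
def auxSimplexPt (t : Icc (0 : ℝ) 1) : stdSimplex ℝ (Fin (m + 2)) :=
  ⟨Pi.single 0 (t : ℝ) + Pi.single 1 (1 - (t : ℝ)), by
    constructor
    · intro i
      simp only [Pi.add_apply, Pi.single_apply]
      have h1 := t.2.1
      have h2 := t.2.2
      split_ifs <;> simp_all <;> linarith
    · simp only [Pi.add_apply]
      rw [Finset.sum_add_distrib, Finset.sum_pi_single', Finset.sum_pi_single']
      simp⟩

lemma auxSimplexPt_zero (t : Icc (0 : ℝ) 1) :
    (auxSimplexPt m t : Fin (m + 2) → ℝ) 0 = (t : ℝ) := by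
  show (Pi.single 0 (t : ℝ) + Pi.single 1 (1 - (t : ℝ)) : Fin (m + 2) → ℝ) 0 = t
  simp [auxSimplexPt, Pi.single_apply, (Fin.zero_ne_one (n := m)).symm]

lemma continuous_auxSimplexPt : Continuous (auxSimplexPt m) := by
  apply Continuous.subtype_mk
  apply continuous_pi
  intro i
  simp only [Pi.add_apply, Pi.single_apply]
  split_ifs <;> fun_prop

/-- Embedding of the cone into the Milnor space. -/
def auxConeToMilnor (G : Type*) [Group G] : Cone G → MilnorE (m + 1) G :=
  Quot.lift
    (fun p => Quot.mk _ (fun i => if i = 0 then p.1⁻¹ else 1, auxSimplexPt m p.2))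
    (by
      rintro a b (rfl | ⟨h0a, h0b⟩)
      · rfl
      · have ht : a.2 = b.2 := Subtype.ext (h0a.trans h0b.symm)
        apply Quot.sound
        refine ⟨by rw [ht], fun i hi => ?_⟩
        have hi0 : i ≠ 0 := by
          intro hh
          apply hi
          rw [hh, auxSimplexPt_zero, h0a]
        simp [hi0])

lemma continuous_auxConeToMilnor (G : Type*) [Group G] [TopologicalSpace G]
    [IsTopologicalGroup G] : Continuous (auxConeToMilnor m G) := by
  apply continuous_quot_lift _
  apply Continuous.comp continuous_quot_mk
  apply Continuous.prodMk
  · apply continuous_pi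
    intro i
    split_ifs
    · exact (continuous_fst).inv
    · exact continuous_const
  · exact (continuous_auxSimplexPt m).comp continuous_snd

lemma milnor_coord_mem (t : stdSimplex ℝ (Fin (m + 2))) :
    (t : Fin (m + 2) → ℝ) 0 ∈ Icc (0 : ℝ) 1 := by
  refine ⟨t.2.1 0, ?_⟩
  rw [← t.2.2]
  exact Finset.single_le_sum (fun i _ => t.2.1 i) (Finset.mem_univ 0)

/-- The readout map from the Milnor space back to the cone. -/
def auxMilnorToCone (G : Type*) [Group G] : MilnorE (m + 1) G → Cone G :=
  Quot.lift
    (fun p => Quot.mk _ ((p.1 0)⁻¹, ⟨(p.2 : Fin (m + 2) → ℝ) 0, milnor_coord_mem m p.2⟩))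
    (by
      rintro a b ⟨ht, hg⟩
      by_cases h0 : (a.2 : Fin (m + 2) → ℝ) 0 = 0
      · exact Quot.sound (Or.inr ⟨h0, by rw [← ht]; exact h0⟩)
      · simp only [hg 0 h0, ht])

lemma continuous_auxMilnorToCone (G : Type*) [Group G] [TopologicalSpace G]
    [IsTopologicalGroup G] : Continuous (auxMilnorToCone m G) := by
  apply continuous_quot_lift _
  apply Continuous.comp continuous_quot_mk
  apply Continuous.prodMk
  · exact ((continuous_apply 0).comp continuous_fst).inv
  · exact Continuous.subtype_mk
      ((continuous_apply 0).comp (continuous_subtype_val.comp continuous_snd)) _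

end Aux

/-- If a Hausdorff topological group acts discontinuously on its
quotient-topologized cone, then for every `n ≥ 1` the diagonal right action
on the quotient-topologized truncated Milnor space `Eₙ G` is also
discontinuous. -/
theorem milnorAct_not_continuous_of_coneAct_not_continuous
    (n : ℕ) (hn : 1 ≤ n) (h : ¬ Continuous (coneAct G)) :
    ¬ Continuous (milnorAct G n) := by
  intro hm
  apply h
  obtain ⟨m, rfl⟩ : ∃ m, n = m + 1 := ⟨n - 1, (Nat.succ_pred_eq_of_pos hn).symm⟩
  have key : coneAct G = (auxMilnorToCone m G) ∘ (milnorAct G (m + 1)) ∘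
      (fun q : G × Cone G => (auxConeToMilnor m G q.2, q.1⁻¹)) := by
    funext q
    obtain ⟨g, c⟩ := q
    induction c using Quot.ind with
    | _ p =>
      obtain ⟨x, t⟩ := p
      show Quot.mk _ (g * x, t) = Quot.mk _ _
      apply congrArg
      refine Prod.ext ?_ (Subtype.ext ?_)
      · show g * x = ((if (0 : Fin (m + 2)) = 0 then x⁻¹ else 1) * g⁻¹)⁻¹
        simp
      · show (t : ℝ) = (auxSimplexPt m t : Fin (m + 2) → ℝ) 0
        rw [auxSimplexPt_zero]
  rw [key]
  exact (continuous_auxMilnorToCone m G).comp (hm.comp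
    (((continuous_auxConeToMilnor m G).comp continuous_snd).prodMk continuous_fst.inv))
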